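/- Let b ≥ 2 and c ≥ 2 be any two distinct integers. Then there exists a probability space and a random variable X on it such that X is both base-b Benford and base-c Benford. -/
import Mathlib


open MeasureTheory Set

noncomputable abbrev μ₀ : Measure ℝ := (volume : Measure ℝ).restrict (Set.Ico (0 : ℝ) 1)

lemma fract_map_aux (t : ℝ) :
    Measure.map (fun u : ℝ => Int.fract (u + t)) μ₀ = μ₀ := by
  have h01 : (0 : ℝ) < 1 := one_pos
  haveI : Fact ((0:ℝ) < 1) := ⟨h01⟩
  set π : ℝ → UnitAddCircle := ((↑) : ℝ → UnitAddCircle) with hπ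
  have hπm : Measurable π := AddCircle.measurable_mk'
  set F : UnitAddCircle → ℝ := fun x => ((AddCircle.measurableEquivIco 1 0 x : Ico (0:ℝ) (0+1)) : ℝ)
    with hF
  have hFm : Measurable F :=
    measurable_subtype_coe.comp (AddCircle.measurableEquivIco 1 0).measurable
  have hFπ : ∀ x : ℝ, F (π x) = Int.fract x := by
    intro x
    show ((AddCircle.equivIco 1 0 (QuotientAddGroup.mk x) : Ico (0:ℝ) (0+1)) : ℝ) = _
    rw [AddCircle.coe_equivIco_mk_apply]
    simp
  -- map π μ₀ = volume on the circle
  have hμIoc : μ₀ = (volume : Measure ℝ).restrict (Set.Ioc (0:ℝ) 1) :=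
    Measure.restrict_congr_set Ico_ae_eq_Ioc
  have h1 : Measure.map π μ₀ = (volume : Measure UnitAddCircle) := by
    rw [hμIoc]
    have := (UnitAddCircle.measurePreserving_mk 0).map_eq
    simpa using this
  -- map F volume = μ₀
  have h3 : Measure.map F (volume : Measure UnitAddCircle) = μ₀ := by
    rw [← h1, Measure.map_map hFm hπm]
    have : (F ∘ π) = Int.fract := by funext x; exact hFπ x
    rw [this]
    have : (Int.fract : ℝ → ℝ) =ᵐ[μ₀] id := by
      refine (ae_restrict_iff' measurableSet_Ico).2 (ae_of_all _ fun x hx => ?_)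
      exact Int.fract_eq_self.2 ⟨hx.1, hx.2⟩
    rw [Measure.map_congr this, Measure.map_id]
  -- rotation invariance
  have h2 : Measure.map (fun y : UnitAddCircle => y + (t : UnitAddCircle))
      (volume : Measure UnitAddCircle) = volume :=
    Measure.IsAddRightInvariant.map_add_right_eq_self _
  -- assemble
  have hcomp : (fun u : ℝ => Int.fract (u + t))
      = F ∘ (fun y : UnitAddCircle => y + (t : UnitAddCircle)) ∘ π := by
    funext u
    simp only [Function.comp_apply]
    rw [← hFπ (u + t)]
    congr 1
  rw [hcomp, ← Function.comp_assoc]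
  rw [← Measure.map_map (hFm.comp (measurable_add_const _)) hπm, h1,
    ← Measure.map_map hFm (measurable_add_const _), h2, h3]

instance : IsProbabilityMeasure μ₀ := by
  constructor
  simp [Real.volume_Ico]

lemma fract_map_fst (r : ℝ) :
    Measure.map (fun p : ℝ × ℝ => Int.fract (p.1 + p.2 * r)) (Measure.prod μ₀ μ₀) = μ₀ := by
  have hg : Measurable fun p : ℝ × ℝ => Int.fract (p.1 + p.2 * r) :=
    (measurable_fst.add (measurable_snd.mul_const r)).fract
  ext s hs
  rw [Measure.map_apply hg hs, Measure.prod_apply_symm (hg hs)]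
  have : ∀ y : ℝ, μ₀ ((fun x => (x, y)) ⁻¹' ((fun p : ℝ × ℝ => Int.fract (p.1 + p.2 * r)) ⁻¹' s))
      = μ₀ s := by
    intro y
    have : ((fun x => (x, y)) ⁻¹' ((fun p : ℝ × ℝ => Int.fract (p.1 + p.2 * r)) ⁻¹' s))
        = (fun u : ℝ => Int.fract (u + y * r)) ⁻¹' s := rfl
    rw [this, ← Measure.map_apply ((measurable_add_const _).fract) hs, fract_map_aux]
  simp_rw [this]
  simp

lemma fract_map_snd (r : ℝ) :
    Measure.map (fun p : ℝ × ℝ => Int.fract (p.1 * r + p.2)) (Measure.prod μ₀ μ₀) = μ₀ := by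
  have hg : Measurable fun p : ℝ × ℝ => Int.fract (p.1 * r + p.2) :=
    ((measurable_fst.mul_const r).add measurable_snd).fract
  ext s hs
  rw [Measure.map_apply hg hs, Measure.prod_apply (hg hs)]
  have : ∀ x : ℝ, μ₀ (Prod.mk x ⁻¹' ((fun p : ℝ × ℝ => Int.fract (p.1 * r + p.2)) ⁻¹' s))
      = μ₀ s := by
    intro x
    have : (Prod.mk x ⁻¹' ((fun p : ℝ × ℝ => Int.fract (p.1 * r + p.2)) ⁻¹' s))
        = (fun v : ℝ => Int.fract (v + x * r)) ⁻¹' s := by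
      ext v; simp [add_comm]
    rw [this, ← Measure.map_apply ((measurable_add_const _).fract) hs, fract_map_aux]
  simp_rw [this]
  simp

/-- For any two distinct integer bases `b, c ≥ 2`, there exists a random
variable that is simultaneously base-`b` Benford and base-`c` Benford. -/
theorem exists_benford_two_bases
    (b c : ℕ) (hb : 2 ≤ b) (hc : 2 ≤ c) (hbc : b ≠ c) :
    ∃ (Ω : Type) (_ : MeasurableSpace Ω) (ℙ : Measure Ω) (_ : IsProbabilityMeasure ℙ)
      (X : Ω → ℝ), Measurable X ∧
      ℙ {ω | 0 < X ω} = 1 ∧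
      Measure.map (fun ω => Int.fract (Real.logb b (X ω))) ℙ
        = volume.restrict (Set.Ico (0 : ℝ) 1) ∧
      Measure.map (fun ω => Int.fract (Real.logb c (X ω))) ℙ
        = volume.restrict (Set.Ico (0 : ℝ) 1) := by
  have hb1 : (1 : ℝ) < (b : ℝ) := by exact_mod_cast lt_of_lt_of_le one_lt_two (by exact_mod_cast hb)
  have hc1 : (1 : ℝ) < (c : ℝ) := by exact_mod_cast lt_of_lt_of_le one_lt_two (by exact_mod_cast hc)
  have hlb : Real.log b ≠ 0 := ne_of_gt (Real.log_pos hb1)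
  have hlc : Real.log c ≠ 0 := ne_of_gt (Real.log_pos hc1)
  refine ⟨ℝ × ℝ, inferInstance, Measure.prod μ₀ μ₀, inferInstance,
    fun p => Real.exp (p.1 * Real.log b + p.2 * Real.log c), ?_, ?_, ?_, ?_⟩
  · exact ((measurable_fst.mul_const _).add (measurable_snd.mul_const _)).exp
  · have : {ω : ℝ × ℝ | 0 < Real.exp (ω.1 * Real.log b + ω.2 * Real.log c)} = Set.univ := by
      ext ω; simp [Real.exp_pos]
    rw [this]
    exact measure_univ
  · have : (fun p : ℝ × ℝ =>
        Int.fract (Real.logb b (Real.exp (p.1 * Real.log b + p.2 * Real.log c))))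
        = fun p : ℝ × ℝ => Int.fract (p.1 + p.2 * (Real.log c / Real.log b)) := by
      funext p
      congr 1
      rw [Real.logb, Real.log_exp]
      field_simp
    rw [this]
    exact fract_map_fst _
  · have : (fun p : ℝ × ℝ =>
        Int.fract (Real.logb c (Real.exp (p.1 * Real.log b + p.2 * Real.log c))))
        = fun p : ℝ × ℝ => Int.fract (p.1 * (Real.log b / Real.log c) + p.2) := by
      funext p
      congr 1
      rw [Real.logb, Real.log_exp]
      field_simp
    rw [this]
    exact fract_map_snd _
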